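/- Let Λ be a compact metric space, X a complete metric space, and S_λ(·,·), λ ∈ Λ, a family of processes on X, each with uniform attractor 𝔸_λ. Suppose there exists a compact set K ⊆ X such that: (a) for every bounded B ⊆ X and each λ there exists t_{B,λ} with S_λ(t+s,s)B ⊆ K for all t ≥ t_{B,λ} and s ∈ ℝ; (b) for each t > 0 the map λ ↦ S_λ(t+s,s)x is continuous uniformly for s ∈ ℝ and x ∈ K; and (U4) there exists T₀ ≥ 0 such that S_λ(t+s,s)K ⊆ K for all t ≥ T₀, all λ ∈ Λ and all s ∈ ℝ. If the map λ ↦ 𝔸_λ is continuous on Λ with respect to the Hausdorff metric, then the family is uniformly equi-attracting: lim_{t→∞} sup_{λ∈Λ, s∈ℝ} ρ_X(S_λ(t+s,s)K, 𝔸_λ) = 0. -/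

import Mathlib

open Filter Topology Metric Bornology

/-- A process on a metric space `X`: a two-parameter family `S t s : X → X` (`t ≥ s`)
with `S t t = id`, `S t τ ∘ S τ s = S t s` for `t ≥ τ ≥ s`, and `(t, s, x) ↦ S t s x`
continuous on the region `s ≤ t`. -/
def IsProcess {X : Type*} [MetricSpace X] (S : ℝ → ℝ → X → X) : Prop :=
  (∀ t : ℝ, S t t = id) ∧
  (∀ t τ s : ℝ, s ≤ τ → τ ≤ t → S t τ ∘ S τ s = S t s) ∧
  ContinuousOn (fun p : ℝ × ℝ × X => S p.1 p.2.1 p.2.2) {p : ℝ × ℝ × X | p.2.1 ≤ p.1}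

/-- `A` uniformly attracts every bounded set under the process `S`:
`lim_{t→∞} sup_{s∈ℝ} ρ_X(S(t+s,s)B, A) = 0` for every bounded `B`. -/
def UniformlyAttracts {X : Type*} [MetricSpace X] (S : ℝ → ℝ → X → X) (A : Set X) :
    Prop :=
  ∀ B : Set X, IsBounded B → ∀ ε : ℝ, 0 < ε → ∃ T : ℝ, ∀ t ≥ T, ∀ s : ℝ, ∀ x ∈ B,
    EMetric.infEdist (S (t + s) s x) A < ENNReal.ofReal ε

/-- A uniform attractor for the process `S`: the minimal compact set that uniformly
attracts every bounded set. -/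
def IsUniformAttractor {X : Type*} [MetricSpace X] (S : ℝ → ℝ → X → X) (A : Set X) :
    Prop :=
  IsCompact A ∧ UniformlyAttracts S A ∧
  ∀ C : Set X, IsCompact C → UniformlyAttracts S C → A ⊆ C

/-- On a compact parameter space, if the map `λ ↦ 𝔸_λ` is continuous in the
Hausdorff metric and (U4) holds (`K` uniformly re-enters itself after time `T₀`),
then the family is uniformly equi-attracting. -/
theorem stmt16 {Λ X : Type*} [MetricSpace Λ] [CompactSpace Λ]
    [MetricSpace X] [CompleteSpace X]
    (S : Λ → ℝ → ℝ → X → X) (hproc : ∀ l : Λ, IsProcess (S l))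
    (A : Λ → Set X) (hA : ∀ l : Λ, IsUniformAttractor (S l) (A l))
    (K : Set X) (hK : IsCompact K)
    -- (a): `K` uniformly absorbs every bounded set
    (habs : ∀ B : Set X, IsBounded B → ∀ l : Λ, ∃ tB : ℝ, ∀ t ≥ tB, ∀ s : ℝ,
      ∀ x ∈ B, S l (t + s) s x ∈ K)
    -- (b): continuity in `λ`, uniformly for `s ∈ ℝ` and `x ∈ K`
    (hunif : ∀ t : ℝ, 0 < t → ∀ l₀ : Λ, ∀ ε : ℝ, 0 < ε → ∃ δ : ℝ, 0 < δ ∧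
      ∀ l : Λ, dist l l₀ < δ → ∀ s : ℝ, ∀ x ∈ K,
        dist (S l (t + s) s x) (S l₀ (t + s) s x) < ε)
    -- (U4): `K` is uniformly positively invariant after time `T₀`
    (T₀ : ℝ) (hT₀ : 0 ≤ T₀)
    (hU4 : ∀ t ≥ T₀, ∀ l : Λ, ∀ s : ℝ, S l (t + s) s '' K ⊆ K)
    -- continuity of `λ ↦ 𝔸_λ` on all of `Λ`
    (hcont : ∀ l₀ : Λ, ∀ ε : ℝ, 0 < ε → ∃ δ : ℝ, 0 < δ ∧ ∀ l : Λ, dist l l₀ < δ →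
      hausdorffDist (A l) (A l₀) < ε) :
    -- uniform equi-attraction
    ∀ ε : ℝ, 0 < ε → ∃ T : ℝ, ∀ t ≥ T, ∀ l : Λ, ∀ s : ℝ, ∀ x ∈ K,
      EMetric.infEdist (S l (t + s) s x) (A l) < ENNReal.ofReal ε :=  by
  intro ε hε
  rcases K.eq_empty_or_nonempty with hKe | ⟨x₀, hx₀⟩
  · exact ⟨0, fun t _ l s x hx => by simp [hKe] at hx⟩
  rcases isEmpty_or_nonempty Λ with hΛ | hΛ
  · exact ⟨0, fun t _ l => isEmptyElim l⟩
  have hε3 : 0 < ε / 3 := by linarith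
  have hAne : ∀ l, (A l).Nonempty := by
    intro l
    obtain ⟨T, hT⟩ := (hA l).2.1 {x₀} (Bornology.isBounded_singleton) 1 one_pos
    have h := hT T le_rfl 0 x₀ rfl
    by_contra hcon
    rw [Set.not_nonempty_iff_eq_empty] at hcon
    simp [hcon, EMetric.infEdist, Metric.infEDist_empty] at h
  have key : ∀ l₀ : Λ, ∃ Tl : ℝ, 0 < Tl ∧ ∃ δ : ℝ, 0 < δ ∧
      (∀ t ≥ Tl, ∀ s : ℝ, ∀ x ∈ K,
        EMetric.infEdist (S l₀ (t + s) s x) (A l₀) < ENNReal.ofReal (ε / 3)) ∧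
      (∀ l : Λ, dist l l₀ < δ → ∀ s : ℝ, ∀ x ∈ K,
        dist (S l (Tl + s) s x) (S l₀ (Tl + s) s x) < ε / 3) ∧
      (∀ l : Λ, dist l l₀ < δ → hausdorffDist (A l) (A l₀) < ε / 3) := by
    intro l₀
    obtain ⟨T, hT⟩ := (hA l₀).2.1 K hK.isBounded (ε / 3) hε3
    have hTpos : (0 : ℝ) < max T 1 := lt_of_lt_of_le one_pos (le_max_right _ _)
    obtain ⟨δ₁, hδ₁, h1⟩ := hunif (max T 1) hTpos l₀ (ε / 3) hε3
    obtain ⟨δ₂, hδ₂, h2⟩ := hcont l₀ (ε / 3) hε3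
    exact ⟨max T 1, hTpos, min δ₁ δ₂, lt_min hδ₁ hδ₂,
      fun t ht s x hx => hT t (le_trans (le_max_left _ _) ht) s x hx,
      fun l hl s x hx => h1 l (lt_of_lt_of_le hl (min_le_left _ _)) s x hx,
      fun l hl => h2 l (lt_of_lt_of_le hl (min_le_right _ _))⟩
  choose Tl hTl δ hδ hatt hu hc using key
  obtain ⟨F, hF⟩ := isCompact_univ.elim_finite_subcover (fun l₀ => Metric.ball l₀ (δ l₀))
    (fun l₀ => Metric.isOpen_ball)
    (fun l _ => Set.mem_iUnion.2 ⟨l, Metric.mem_ball_self (hδ l)⟩)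
  obtain ⟨l'⟩ := hΛ
  have hFne : F.Nonempty := by
    have := hF (Set.mem_univ l')
    rw [Set.mem_iUnion₂] at this
    obtain ⟨i, hi, _⟩ := this
    exact ⟨i, hi⟩
  refine ⟨T₀ + F.sup' hFne Tl, fun t ht l s x hx => ?_⟩
  have hl : l ∈ ⋃ i ∈ F, Metric.ball i (δ i) := hF (Set.mem_univ l)
  rw [Set.mem_iUnion₂] at hl
  obtain ⟨i, hiF, hli⟩ := hl
  rw [Metric.mem_ball] at hli
  have hTi : Tl i ≤ F.sup' hFne Tl := Finset.le_sup' Tl hiF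
  have ht' : T₀ ≤ t - Tl i := by linarith
  -- y lands in K
  have hy : S l (t - Tl i + s) s x ∈ K :=
    hU4 (t - Tl i) ht' l s ⟨x, hx, rfl⟩
  set s' : ℝ := t - Tl i + s with hs'
  set y : X := S l s' s x with hy'
  have hcoc : S l (t + s) s x = S l (Tl i + s') s' y := by
    have h1 : s ≤ s' := by
      have := hTl i
      simp only [hs']; linarith
    have h2 : s' ≤ t + s := by simp only [hs']; linarith [hTl i]
    have := (hproc l).2.1 (t + s) s' s h1 h2
    have heq : Tl i + s' = t + s := by simp only [hs']; ring
    rw [heq]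
    calc S l (t + s) s x = (S l (t + s) s' ∘ S l s' s) x := by rw [this]
      _ = S l (t + s) s' y := rfl
  rw [hcoc]
  set z : X := S l (Tl i + s') s' y with hz
  set z' : X := S i (Tl i + s') s' y with hz'
  have hd1 : dist z z' < ε / 3 := hu i l hli s' y hy
  have hd2 : EMetric.infEdist z' (A i) < ENNReal.ofReal (ε / 3) :=
    hatt i (Tl i) le_rfl s' y hy
  have hd3 : hausdorffDist (A l) (A i) < ε / 3 := hc i l hli
  have hne : EMetric.hausdorffEdist (A i) (A l) ≠ ⊤ :=
    Metric.hausdorffEdist_ne_top_of_nonempty_of_bounded (hAne i) (hAne l)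
      (hA i).1.isBounded (hA l).1.isBounded
  have hd3' : EMetric.hausdorffEdist (A i) (A l) < ENNReal.ofReal (ε / 3) := by
    rw [ENNReal.lt_ofReal_iff_toReal_lt hne]
    calc (EMetric.hausdorffEdist (A i) (A l)).toReal
        = hausdorffDist (A i) (A l) := rfl
      _ = hausdorffDist (A l) (A i) := Metric.hausdorffDist_comm
      _ < ε / 3 := hd3
  calc EMetric.infEdist z (A l)
      ≤ EMetric.infEdist z (A i) + EMetric.hausdorffEdist (A i) (A l) :=
        EMetric.infEdist_le_infEdist_add_hausdorffEdist
    _ ≤ (edist z z' + EMetric.infEdist z' (A i)) + EMetric.hausdorffEdist (A i) (A l) := by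
        gcongr
        exact EMetric.infEdist_le_edist_add_infEdist
    _ < (ENNReal.ofReal (ε / 3) + ENNReal.ofReal (ε / 3)) + ENNReal.ofReal (ε / 3) := by
        apply ENNReal.add_lt_add (ENNReal.add_lt_add ?_ hd2) hd3'
        rw [edist_dist]
        exact (ENNReal.ofReal_lt_ofReal_iff hε3).2 hd1
    _ = ENNReal.ofReal ε := by
        rw [← ENNReal.ofReal_add (by linarith) (by linarith),
            ← ENNReal.ofReal_add (by linarith) (by linarith)]
        congr 1
        ring
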